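/- arXiv:2010.04778 — 5 statements merged into one kernel-verified Lean document; each statement's English description precedes it below -/
import Mathlib

section
/- For every reciprocal PC matrix C, the Koczkodaj inconsistency index satisfies 0 ≤ KI(C) < 1. -/
open Finset

noncomputable def KI {n : ℕ} (C : Matrix (Fin n) (Fin n) ℝ) : ℝ :=
  ⨆ i : Fin n, ⨆ j : Fin n, ⨆ k : Fin n,
    min |1 - C i j / (C i k * C k j)| |1 - (C i k * C k j) / C i j|

lemma KI_key (x : ℝ) (hx : 0 < x) : min |1 - x| |1 - x⁻¹| < 1 := by
  rcases le_or_gt x 1 with h | h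
  · calc min |1 - x| |1 - x⁻¹| ≤ |1 - x| := min_le_left _ _
      _ = 1 - x := abs_of_nonneg (by linarith)
      _ < 1 := by linarith
  · have hx' : 0 < x⁻¹ := by positivity
    have h' : x⁻¹ < 1 := by
      rw [inv_lt_one_iff₀]; right; exact h
    calc min |1 - x| |1 - x⁻¹| ≤ |1 - x⁻¹| := min_le_right _ _
      _ = 1 - x⁻¹ := abs_of_nonneg (by linarith)
      _ < 1 := by linarith

theorem KI_nonneg_lt_one {n : ℕ} (hn : 2 < n) (C : Matrix (Fin n) (Fin n) ℝ)
    (hpos : ∀ i j, 0 < C i j) (hdiag : ∀ i, C i i = 1)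
    (hrec : ∀ i j, C i j * C j i = 1) :
    0 ≤ KI C ∧ KI C < 1 := by
  have hne : Nonempty (Fin n) := ⟨⟨0, by omega⟩⟩
  set g : Fin n → Fin n → Fin n → ℝ := fun i j k =>
    min |1 - C i j / (C i k * C k j)| |1 - (C i k * C k j) / C i j| with hg
  have hlt : ∀ i j k, g i j k < 1 := by
    intro i j k
    have hx : 0 < C i j / (C i k * C k j) := by
      have := hpos i j; have := hpos i k; have := hpos k j; positivity
    have heq : (C i k * C k j) / C i j = (C i j / (C i k * C k j))⁻¹ := by
      rw [inv_div]
    rw [hg]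
    simp only [heq]
    exact KI_key _ hx
  have hnn : ∀ i j k, 0 ≤ g i j k := fun i j k =>
    le_min (abs_nonneg _) (abs_nonneg _)
  have hKI : KI C = ⨆ i, ⨆ j, ⨆ k, g i j k := rfl
  constructor
  · obtain ⟨i0⟩ := hne
    rw [hKI]
    have h1 : g i0 i0 i0 ≤ ⨆ k, g i0 i0 k :=
      le_ciSup (Set.Finite.bddAbove (Set.finite_range _)) i0
    have h2 : (⨆ k, g i0 i0 k) ≤ ⨆ j, ⨆ k, g i0 j k :=
      le_ciSup (f := fun j => ⨆ k, g i0 j k)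
        (Set.Finite.bddAbove (Set.finite_range _)) i0
    have h3 : (⨆ j, ⨆ k, g i0 j k) ≤ ⨆ i, ⨆ j, ⨆ k, g i j k :=
      le_ciSup (f := fun i => ⨆ j, ⨆ k, g i j k)
        (Set.Finite.bddAbove (Set.finite_range _)) i0
    have := hnn i0 i0 i0
    linarith
  · obtain ⟨⟨i, j, k⟩, hmax⟩ :=
      Finite.exists_max (fun p : Fin n × Fin n × Fin n => g p.1 p.2.1 p.2.2)
    rw [hKI]
    have hle : (⨆ i, ⨆ j, ⨆ k, g i j k) ≤ g i j k := by
      refine ciSup_le fun i' => ciSup_le fun j' => ciSup_le fun k' => ?_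
      exact hmax (i', j', k')
    exact lt_of_le_of_lt hle (hlt i j k)
end

section
/- For the geometric mean method priority vector w_gm of a reciprocal PC matrix C with κ = 1 − KI(C) > 0, it holds for all i, j that κ·c_{ji} ≤ w_gm(a_j)/w_gm(a_i) ≤ (1/κ)·c_{ji}. -/
open Finset

theorem gmm_ratio_bound {n : ℕ} (hn : 2 < n) (C : Matrix (Fin n) (Fin n) ℝ)
    (hpos : ∀ i j, 0 < C i j) (hdiag : ∀ i, C i i = 1)
    (hrec : ∀ i j, C i j * C j i = 1)
    (κ : ℝ) (hκ : κ = 1 - KI C) (hκpos : 0 < κ)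
    (wgm : Fin n → ℝ) (hwpos : ∀ i, 0 < wgm i)
    (hgm : ∃ c : ℝ, 0 < c ∧ ∀ i, wgm i = c * (∏ r, C i r) ^ ((1 : ℝ) / n)) :
    ∀ i j : Fin n, κ * C j i ≤ wgm j / wgm i ∧ wgm j / wgm i ≤ κ⁻¹ * C j i := by
  obtain ⟨c, hc, hw⟩ := hgm
  have hnpos : 0 < n := by omega
  have hnne : (n : ℝ) ≠ 0 := Nat.cast_ne_zero.mpr hnpos.ne'
  have hbdd : ∀ (f : Fin n → ℝ), BddAbove (Set.range f) := fun f =>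
    (Set.finite_range f).bddAbove
  have hKIle : ∀ a b k : Fin n,
      min |1 - C a b / (C a k * C k b)| |1 - (C a k * C k b) / C a b| ≤ KI C := by
    intro a b k
    calc min |1 - C a b / (C a k * C k b)| |1 - (C a k * C k b) / C a b|
        ≤ ⨆ k : Fin n, min |1 - C a b / (C a k * C k b)| |1 - (C a k * C k b) / C a b| :=
          le_ciSup (f := fun k : Fin n =>
            min |1 - C a b / (C a k * C k b)| |1 - (C a k * C k b) / C a b|) (hbdd _) k
      _ ≤ ⨆ j : Fin n, ⨆ k : Fin n,
            min |1 - C a j / (C a k * C k j)| |1 - (C a k * C k j) / C a j| :=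
          le_ciSup (f := fun j : Fin n => ⨆ k : Fin n,
            min |1 - C a j / (C a k * C k j)| |1 - (C a k * C k j) / C a j|) (hbdd _) b
      _ ≤ KI C := by
          unfold KI
          exact le_ciSup (f := fun i : Fin n => ⨆ j : Fin n, ⨆ k : Fin n,
            min |1 - C i j / (C i k * C k j)| |1 - (C i k * C k j) / C i j|) (hbdd _) a
  have i0 : Fin n := ⟨0, hnpos⟩
  have hKI0 : 0 ≤ KI C := by simpa [hdiag] using hKIle i0 i0 i0
  have hκ1 : κ ≤ 1 := by rw [hκ]; linarith
  have hκinvpos : 0 < κ⁻¹ := inv_pos.mpr hκpos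
  have hk1 : κ * κ⁻¹ = 1 := mul_inv_cancel₀ hκpos.ne'
  intro i j
  have key : ∀ r : Fin n, κ * C j i ≤ C j r / C i r ∧ C j r / C i r ≤ κ⁻¹ * C j i := by
    intro r
    set u := C j r / (C j i * C i r) with hudef
    have hupos : 0 < u := div_pos (hpos j r) (mul_pos (hpos j i) (hpos i r))
    have hu : C j r / C i r = u * C j i := by
      rw [hudef]; field_simp [(hpos j i).ne', (hpos i r).ne']
    have hmin := hKIle j r i
    have hinv : (C j i * C i r) / C j r = u⁻¹ := by
      rw [hudef]; field_simp
    rw [hinv] at hmin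
    have hmin' : min |1 - u| |1 - u⁻¹| ≤ 1 - κ := by
      rw [hudef]; rw [hudef] at hmin; linarith [hmin]
    have huinv : u * u⁻¹ = 1 := mul_inv_cancel₀ hupos.ne'
    have hbound : κ ≤ u ∧ u ≤ κ⁻¹ := by
      rcases min_le_iff.mp hmin' with h | h
      · rw [abs_le] at h
        constructor
        · linarith [h.2]
        · nlinarith [h.1, sq_nonneg (1 - κ)]
      · rw [abs_le] at h
        have hui1 : κ ≤ u⁻¹ := by linarith [h.2]
        have hui2 : u⁻¹ ≤ 2 - κ := by linarith [h.1]
        constructor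
        · nlinarith [sq_nonneg (1 - κ)]
        · nlinarith
    constructor
    · rw [hu]; exact mul_le_mul_of_nonneg_right hbound.1 (hpos j i).le
    · rw [hu]; exact mul_le_mul_of_nonneg_right hbound.2 (hpos j i).le
  have hlow : (κ * C j i) ^ n ≤ ∏ r, (C j r / C i r) := by
    calc (κ * C j i) ^ n = ∏ _r : Fin n, (κ * C j i) := by
          simp [Finset.prod_const, Finset.card_univ]
      _ ≤ ∏ r, (C j r / C i r) :=
          Finset.prod_le_prod (fun r _ => (mul_pos hκpos (hpos j i)).le)
            (fun r _ => (key r).1)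
  have hhigh : ∏ r, (C j r / C i r) ≤ (κ⁻¹ * C j i) ^ n := by
    calc ∏ r, (C j r / C i r) ≤ ∏ _r : Fin n, (κ⁻¹ * C j i) :=
          Finset.prod_le_prod (fun r _ => (div_pos (hpos j r) (hpos i r)).le)
            (fun r _ => (key r).2)
      _ = (κ⁻¹ * C j i) ^ n := by simp [Finset.prod_const, Finset.card_univ]
  have hPnonneg : 0 ≤ ∏ r, (C j r / C i r) :=
    Finset.prod_nonneg fun r _ => (div_pos (hpos j r) (hpos i r)).le
  have hratio : wgm j / wgm i = (∏ r, (C j r / C i r)) ^ ((1 : ℝ) / n) := by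
    rw [hw i, hw j, mul_div_mul_left _ _ hc.ne', Finset.prod_div_distrib,
      Real.div_rpow (Finset.prod_nonneg fun r _ => (hpos j r).le)
        (Finset.prod_nonneg fun r _ => (hpos i r).le)]
  have hpowsimp : ∀ x : ℝ, 0 ≤ x → (x ^ n) ^ ((1 : ℝ) / n) = x := by
    intro x hx
    rw [← Real.rpow_natCast x n, ← Real.rpow_mul hx, mul_one_div, div_self hnne,
      Real.rpow_one]
  have hinvn : 0 ≤ (1 : ℝ) / n := by positivity
  constructor
  · calc κ * C j i = ((κ * C j i) ^ n) ^ ((1 : ℝ) / n) :=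
          (hpowsimp _ (mul_pos hκpos (hpos j i)).le).symm
      _ ≤ (∏ r, (C j r / C i r)) ^ ((1 : ℝ) / n) :=
          Real.rpow_le_rpow (pow_nonneg (mul_pos hκpos (hpos j i)).le n) hlow hinvn
      _ = wgm j / wgm i := hratio.symm
  · calc wgm j / wgm i = (∏ r, (C j r / C i r)) ^ ((1 : ℝ) / n) := hratio
      _ ≤ ((κ⁻¹ * C j i) ^ n) ^ ((1 : ℝ) / n) :=
          Real.rpow_le_rpow hPnonneg hhigh hinvn
      _ = κ⁻¹ * C j i := hpowsimp _ (mul_pos hκinvpos (hpos j i)).le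
end

section
/- For the eigenvalue method priority vector w_ev of a reciprocal PC matrix C with κ = 1 − KI(C) > 0, it holds for all i, j that κ·c_{ij} ≤ w_ev(a_i)/w_ev(a_j) ≤ (1/κ)·c_{ij}. -/
open Finset

theorem evm_ratio_bound {n : ℕ} (hn : 2 < n) (C : Matrix (Fin n) (Fin n) ℝ)
    (hpos : ∀ i j, 0 < C i j) (hdiag : ∀ i, C i i = 1)
    (hrec : ∀ i j, C i j * C j i = 1)
    (κ : ℝ) (hκ : κ = 1 - KI C) (hκpos : 0 < κ)
    (wev : Fin n → ℝ) (hwpos : ∀ i, 0 < wev i) (lam : ℝ)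
    (hev : ∀ i, (∑ r, C i r * wev r) = lam * wev i) :
    ∀ i j : Fin n, κ * C i j ≤ wev i / wev j ∧ wev i / wev j ≤ κ⁻¹ * C i j := by
  haveI : NeZero n := ⟨by omega⟩
  set f : Fin n → Fin n → Fin n → ℝ := fun i j k =>
    min |1 - C i j / (C i k * C k j)| |1 - (C i k * C k j) / C i j| with hf
  have hle : ∀ i j k, f i j k ≤ KI C := by
    intro i j k
    have h1 : f i j k ≤ ⨆ k, f i j k :=
      le_ciSup (Set.Finite.bddAbove (Set.finite_range _)) k
    have h2 : (⨆ k, f i j k) ≤ ⨆ j, ⨆ k, f i j k :=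
      le_ciSup (f := fun j => ⨆ k, f i j k) (Set.Finite.bddAbove (Set.finite_range _)) j
    have h3 : (⨆ j, ⨆ k, f i j k) ≤ ⨆ i, ⨆ j, ⨆ k, f i j k :=
      le_ciSup (f := fun i => ⨆ j, ⨆ k, f i j k) (Set.Finite.bddAbove (Set.finite_range _)) i
    calc f i j k ≤ _ := h1
      _ ≤ _ := h2
      _ ≤ _ := h3
  have hKI : KI C = 1 - κ := by rw [hκ]; ring
  have hKI0 : 0 ≤ KI C := by
    have h0 := hle 0 0 0
    have hz : f 0 0 0 = 0 := by simp [hf, hdiag]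
    linarith
  have hκinv : κ * κ⁻¹ = 1 := mul_inv_cancel₀ (ne_of_gt hκpos)
  have h2k : 2 - κ ≤ κ⁻¹ := by
    rw [inv_eq_one_div, le_div_iff₀ hκpos]; nlinarith [sq_nonneg (1 - κ)]
  -- triad bound
  have triad : ∀ i j k : Fin n, κ * (C i k * C k j) ≤ C i j ∧
      C i j ≤ κ⁻¹ * (C i k * C k j) := by
    intro i j k
    have hp : 0 < C i k * C k j := mul_pos (hpos i k) (hpos k j)
    have hq : 0 < C i j := hpos i j
    have h := hle i j k
    rw [hKI] at h
    rcases min_le_iff.mp h with hc | hc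
    · rw [abs_le] at hc
      replace h := hc
      have hx1 : κ * (C i k * C k j) ≤ C i j := by
        have : κ ≤ C i j / (C i k * C k j) := by linarith [h.2]
        rw [le_div_iff₀ hp] at this; linarith
      have hx2 : C i j ≤ (2 - κ) * (C i k * C k j) := by
        have : C i j / (C i k * C k j) ≤ 2 - κ := by linarith [h.1]
        rw [div_le_iff₀ hp] at this; linarith
      exact ⟨hx1, by nlinarith⟩
    · rw [abs_le] at hc
      replace h := hc
      have hx1 : κ * C i j ≤ C i k * C k j := by
        have : κ ≤ (C i k * C k j) / C i j := by linarith [h.2]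
        rw [le_div_iff₀ hq] at this; linarith
      have hx2 : C i k * C k j ≤ (2 - κ) * C i j := by
        have : (C i k * C k j) / C i j ≤ 2 - κ := by linarith [h.1]
        rw [div_le_iff₀ hq] at this; linarith
      constructor
      · nlinarith [sq_nonneg (1 - κ)]
      · nlinarith
  -- eigenvalue part
  have hlam : 0 < lam := by
    have h := hev 0
    have hsum : 0 < ∑ r, C 0 r * wev r :=
      Finset.sum_pos (fun r _ => mul_pos (hpos 0 r) (hwpos r)) ⟨0, mem_univ 0⟩
    have := hwpos 0
    nlinarith
  intro i j
  have hlow : κ * C i j * (lam * wev j) ≤ lam * wev i := by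
    rw [← hev i, ← hev j, Finset.mul_sum]
    apply Finset.sum_le_sum
    intro r _
    have := (triad i r j).1
    have := (hwpos r).le
    nlinarith
  have hhigh : lam * wev i ≤ κ⁻¹ * C i j * (lam * wev j) := by
    rw [← hev i, ← hev j, Finset.mul_sum]
    apply Finset.sum_le_sum
    intro r _
    have := (triad i r j).2
    have := (hwpos r).le
    nlinarith
  have hwj := hwpos j
  constructor
  · rw [le_div_iff₀ hwj]; nlinarith
  · rw [div_le_iff₀ hwj]; nlinarith
end

section
/- Let w_ev and w_gm be the EVM and GMM priority vectors of a reciprocal PC matrix C with κ = 1 − KI(C) > 0. Then for all i, j, κ² ≤ (w_ev(a_i)/w_ev(a_j))·(w_gm(a_j)/w_gm(a_i)) ≤ 1/κ². -/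
open Finset

lemma KI_triple_bound {n : ℕ} (hn : 0 < n) (C : Matrix (Fin n) (Fin n) ℝ)
    (hpos : ∀ i j, 0 < C i j) (κ : ℝ) (hκ : κ = 1 - KI C) (hκpos : 0 < κ)
    (i j k : Fin n) : κ * (C i k * C k j) ≤ C i j ∧ C i j ≤ (C i k * C k j) / κ := by
  have hne : Nonempty (Fin n) := ⟨⟨0, hn⟩⟩
  set f : Fin n → Fin n → Fin n → ℝ := fun i j k =>
    min |1 - C i j / (C i k * C k j)| |1 - (C i k * C k j) / C i j| with hf
  have h1 : f i j k ≤ KI C := by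
    have hk : f i j k ≤ ⨆ k, f i j k :=
      le_ciSup (f := fun k => f i j k) (Set.Finite.bddAbove (Set.finite_range _)) k
    have hj : (⨆ k, f i j k) ≤ ⨆ j, ⨆ k, f i j k :=
      le_ciSup (f := fun j => ⨆ k, f i j k) (Set.Finite.bddAbove (Set.finite_range _)) j
    have hi : (⨆ j, ⨆ k, f i j k) ≤ ⨆ i, ⨆ j, ⨆ k, f i j k :=
      le_ciSup (f := fun i => ⨆ j, ⨆ k, f i j k) (Set.Finite.bddAbove (Set.finite_range _)) i
    exact le_trans (le_trans hk hj) hi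
  have hmin : f i j k ≤ 1 - κ := by
    have : (1 : ℝ) - κ = KI C := by rw [hκ]; ring
    linarith
  have hd : 0 < C i k * C k j := mul_pos (hpos i k) (hpos k j)
  have hc : 0 < C i j := hpos i j
  have h2κ : 2 - κ ≤ 1 / κ := by
    rw [le_div_iff₀ hκpos]; nlinarith [sq_nonneg (1 - κ)]
  rcases min_le_iff.mp hmin with h | h
  · rw [abs_le] at h
    obtain ⟨ha, hb⟩ := h
    have hx1 : κ ≤ C i j / (C i k * C k j) := by linarith
    have hx2 : C i j / (C i k * C k j) ≤ 2 - κ := by linarith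
    constructor
    · exact (le_div_iff₀ hd).mp hx1
    · have := (div_le_iff₀ hd).mp (hx2.trans h2κ)
      calc C i j ≤ 1 / κ * (C i k * C k j) := this
        _ = (C i k * C k j) / κ := by ring
  · rw [abs_le] at h
    obtain ⟨ha, hb⟩ := h
    have hy1 : κ ≤ (C i k * C k j) / C i j := by linarith
    have hy2 : (C i k * C k j) / C i j ≤ 2 - κ := by linarith
    constructor
    · have := (div_le_div_iff₀ hc hκpos).mp (hy2.trans h2κ)
      -- (C i k * C k j) * κ ≤ 1 * C i j
      nlinarith
    · rw [le_div_iff₀ hκpos]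
      have := (le_div_iff₀ hc).mp hy1
      nlinarith

theorem evm_gmm_beta_bound {n : ℕ} (hn : 2 < n) (C : Matrix (Fin n) (Fin n) ℝ)
    (hpos : ∀ i j, 0 < C i j) (hdiag : ∀ i, C i i = 1)
    (hrec : ∀ i j, C i j * C j i = 1)
    (κ : ℝ) (hκ : κ = 1 - KI C) (hκpos : 0 < κ)
    (wev : Fin n → ℝ) (hwev : ∀ i, 0 < wev i) (lam : ℝ)
    (hev : ∀ i, (∑ r, C i r * wev r) = lam * wev i)
    (wgm : Fin n → ℝ) (hwgm : ∀ i, 0 < wgm i)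
    (hgm : ∃ c : ℝ, 0 < c ∧ ∀ i, wgm i = c * (∏ r, C i r) ^ ((1 : ℝ) / n)) :
    ∀ i j : Fin n,
      κ ^ 2 ≤ (wev i / wev j) * (wgm j / wgm i) ∧
        (wev i / wev j) * (wgm j / wgm i) ≤ 1 / κ ^ 2 := by
  have hn0 : 0 < n := by omega
  have hne : Nonempty (Fin n) := ⟨⟨0, hn0⟩⟩
  have key := KI_triple_bound hn0 C hpos κ hκ hκpos
  -- lam is positive
  have hlam : 0 < lam := by
    obtain ⟨i0⟩ := hne
    have hs : 0 < ∑ r, C i0 r * wev r :=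
      Finset.sum_pos (fun r _ => mul_pos (hpos i0 r) (hwev r)) ⟨i0, mem_univ i0⟩
    rw [hev i0] at hs
    nlinarith [hwev i0]
  -- EV bound: κ * C i j * wev j ≤ wev i for all i j
  have hE : ∀ i j : Fin n, κ * C i j * wev j ≤ wev i := by
    intro i j
    have hsum : κ * C i j * (∑ r, C j r * wev r) ≤ ∑ r, C i r * wev r := by
      rw [Finset.mul_sum]
      refine Finset.sum_le_sum fun r _ => ?_
      have hk := (key i r j).1
      nlinarith [mul_le_mul_of_nonneg_right hk (hwev r).le]
    rw [hev i, hev j] at hsum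
    have h' : lam * (κ * C i j * wev j) ≤ lam * wev i := by
      calc lam * (κ * C i j * wev j) = κ * C i j * (lam * wev j) := by ring
        _ ≤ lam * wev i := hsum
    exact le_of_mul_le_mul_left h' hlam
  -- GM bound: κ * C j i * wgm i ≤ wgm j for all i j
  obtain ⟨c, hcpos, hcf⟩ := hgm
  have hG : ∀ i j : Fin n, κ * C j i * wgm i ≤ wgm j := by
    intro i j
    have hprodpos : ∀ a : Fin n, 0 < ∏ r, C a r :=
      fun a => Finset.prod_pos fun r _ => hpos a r
    have hP : (κ * C j i) ^ n * ∏ r, C i r ≤ ∏ r, C j r := by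
      have h1 : (κ * C j i) ^ n * ∏ r, C i r = ∏ r, (κ * C j i * C i r) := by
        rw [Finset.prod_mul_distrib, Finset.prod_const, Finset.card_univ, Fintype.card_fin]
      rw [h1]
      refine Finset.prod_le_prod
        (fun r _ => (mul_pos (mul_pos hκpos (hpos j i)) (hpos i r)).le)
        fun r _ => by rw [mul_assoc]; exact (key j r i).1
    have hbase : 0 < κ * C j i := mul_pos hκpos (hpos j i)
    have hrpow : ((κ * C j i) ^ n * ∏ r, C i r) ^ ((1:ℝ)/n) ≤ (∏ r, C j r) ^ ((1:ℝ)/n) :=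
      Real.rpow_le_rpow (mul_pos (pow_pos hbase n) (hprodpos i)).le hP (by positivity)
    have hsplit : ((κ * C j i) ^ n * ∏ r, C i r) ^ ((1:ℝ)/n)
        = (κ * C j i) * (∏ r, C i r) ^ ((1:ℝ)/n) := by
      rw [Real.mul_rpow (pow_pos hbase n).le (hprodpos i).le]
      congr 1
      rw [← Real.rpow_natCast (κ * C j i) n, ← Real.rpow_mul hbase.le,
        show (n:ℝ) * ((1:ℝ)/n) = 1 by field_simp, Real.rpow_one]
    rw [hsplit] at hrpow
    rw [hcf i, hcf j]
    calc κ * C j i * (c * (∏ r, C i r) ^ ((1:ℝ)/n))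
        = c * ((κ * C j i) * (∏ r, C i r) ^ ((1:ℝ)/n)) := by ring
      _ ≤ c * (∏ r, C j r) ^ ((1:ℝ)/n) := by
          exact mul_le_mul_of_nonneg_left hrpow hcpos.le
  intro i j
  have hA1 : κ * C i j ≤ wev i / wev j := by
    rw [le_div_iff₀ (hwev j)]; exact hE i j
  have hB1 : κ * C j i ≤ wgm j / wgm i := by
    rw [le_div_iff₀ (hwgm i)]; exact hG i j
  have hA2 : wev i / wev j ≤ C i j / κ := by
    rw [div_le_div_iff₀ (hwev j) hκpos]
    have h2 := hE j i  -- κ * C j i * wev i ≤ wev j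
    have h3 := mul_le_mul_of_nonneg_left h2 (hpos i j).le
    have h4 := hrec i j
    have h5 : C i j * (κ * C j i * wev i) = wev i * κ := by
      rw [show C i j * (κ * C j i * wev i) = κ * wev i * (C i j * C j i) from by ring, h4]
      ring
    linarith
  have hB2 : wgm j / wgm i ≤ C j i / κ := by
    rw [div_le_div_iff₀ (hwgm i) hκpos]
    have h2 := hG j i  -- κ * C i j * wgm j ≤ wgm i
    have h3 := mul_le_mul_of_nonneg_left h2 (hpos j i).le
    have h4 := hrec i j
    have h5 : C j i * (κ * C i j * wgm j) = wgm j * κ := by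
      rw [show C j i * (κ * C i j * wgm j) = κ * wgm j * (C i j * C j i) from by ring, h4]
      ring
    linarith
  have hApos : 0 < wev i / wev j := div_pos (hwev i) (hwev j)
  have hBpos : 0 < wgm j / wgm i := div_pos (hwgm j) (hwgm i)
  constructor
  · calc κ ^ 2 = (κ * C i j) * (κ * C j i) := by
          rw [show (κ * C i j) * (κ * C j i) = κ ^ 2 * (C i j * C j i) by ring, hrec i j,
            mul_one]
      _ ≤ (wev i / wev j) * (wgm j / wgm i) :=
          mul_le_mul hA1 hB1 (mul_pos hκpos (hpos j i)).le hApos.le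
  · calc (wev i / wev j) * (wgm j / wgm i)
        ≤ (C i j / κ) * (C j i / κ) :=
          mul_le_mul hA2 hB2 hBpos.le (div_pos (hpos i j) hκpos).le
      _ = 1 / κ ^ 2 := by
          rw [div_mul_div_comm, hrec i j]; ring
end

section
/- For any two positive vectors w₁, w₂ ∈ ℝ^n, the compatibility indices satisfy the chain of inequalities: lower-comp(w₁,w₂) ≤ comp(w₁,w₂) ≤ upper-comp(w₁,w₂) ≤ compmax(w₁,w₂). -/
open Finset

noncomputable def beta {n : ℕ} (w1 w2 : Fin n → ℝ) (i j : Fin n) : ℝ :=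
  (w1 i / w1 j) * (w2 j / w2 i)

noncomputable def vcomp {n : ℕ} (w1 w2 : Fin n → ℝ) : ℝ :=
  (1 / (n : ℝ) ^ 2) * ∑ i, ∑ j, beta w1 w2 i j

noncomputable def vcompUpper {n : ℕ} (w1 w2 : Fin n → ℝ) : ℝ :=
  (2 / ((n : ℝ) * ((n : ℝ) - 1))) *
    ∑ i, ∑ j, if i < j then max (beta w1 w2 i j) (beta w1 w2 j i) else 0

noncomputable def vcompLower {n : ℕ} (w1 w2 : Fin n → ℝ) : ℝ :=
  (2 / ((n : ℝ) * ((n : ℝ) - 1))) *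
    ∑ i, ∑ j, if i < j then min (beta w1 w2 i j) (beta w1 w2 j i) else 0

noncomputable def vcompMax {n : ℕ} (w1 w2 : Fin n → ℝ) : ℝ :=
  ⨆ i : Fin n, ⨆ j : Fin n, beta w1 w2 i j

lemma split_sum {n : ℕ} (f : Fin n → Fin n → ℝ) :
    ∑ i, ∑ j, f i j
      = (∑ i, ∑ j, if i < j then f i j + f j i else 0) + ∑ i, f i i := by
  have h1 : ∀ i j : Fin n,
      f i j = (if i < j then f i j else 0) + (if j < i then f i j else 0)
        + (if i = j then f i j else 0) := by
    intro i j
    rcases lt_trichotomy i j with h | h | h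
    · simp [h, h.ne, asymm h]
    · simp [h]
    · simp [h, h.ne', asymm h]
  have e1 : ∑ i, ∑ j, f i j
      = (∑ i, ∑ j, if i < j then f i j else 0)
        + (∑ i, ∑ j, if j < i then f i j else 0)
        + (∑ i, ∑ j, if i = j then f i j else 0) := by
    rw [← Finset.sum_add_distrib, ← Finset.sum_add_distrib]
    refine Finset.sum_congr rfl fun i _ => ?_
    rw [← Finset.sum_add_distrib, ← Finset.sum_add_distrib]
    exact Finset.sum_congr rfl fun j _ => h1 i j
  have e2 : (∑ i, ∑ j, if j < i then f i j else 0)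
      = ∑ i, ∑ j, if i < j then f j i else 0 := Finset.sum_comm
  have e3 : (∑ i, ∑ j, if i = j then f i j else 0) = ∑ i, f i i := by
    refine Finset.sum_congr rfl fun i _ => ?_
    simp
  rw [e1, e2, e3]
  congr 1
  rw [← Finset.sum_add_distrib]
  refine Finset.sum_congr rfl fun i _ => ?_
  rw [← Finset.sum_add_distrib]
  refine Finset.sum_congr rfl fun j _ => ?_
  split <;> simp

theorem vcompat_chain {n : ℕ} (hn : 2 ≤ n) (w1 w2 : Fin n → ℝ)
    (h1 : ∀ i, 0 < w1 i) (h2 : ∀ i, 0 < w2 i) :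
    vcompLower w1 w2 ≤ vcomp w1 w2 ∧
      vcomp w1 w2 ≤ vcompUpper w1 w2 ∧
        vcompUpper w1 w2 ≤ vcompMax w1 w2 := by
  have hn1 : (1:ℝ) ≤ (n:ℝ) - 1 := by
    have : (2:ℝ) ≤ (n:ℝ) := by exact_mod_cast hn
    linarith
  have hnpos : (0:ℝ) < (n:ℝ) := by positivity
  have hd : (0:ℝ) < (n:ℝ) * ((n:ℝ) - 1) := by nlinarith
  have he : (0:ℝ) < (n:ℝ) ^ 2 := by positivity
  set B := beta w1 w2 with hB
  have hBpos : ∀ i j, 0 < B i j := fun i j =>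
    mul_pos (div_pos (h1 i) (h1 j)) (div_pos (h2 j) (h2 i))
  have hBmul : ∀ i j, B i j * B j i = 1 := fun i j => by
    show (w1 i / w1 j) * (w2 j / w2 i) * ((w1 j / w1 i) * (w2 i / w2 j)) = 1
    have a1 := (h1 i).ne'; have a2 := (h1 j).ne'
    have a3 := (h2 i).ne'; have a4 := (h2 j).ne'
    field_simp
  have hBdiag : ∀ i, B i i = 1 := fun i => by
    show (w1 i / w1 i) * (w2 i / w2 i) = 1
    rw [div_self (h1 i).ne', div_self (h2 i).ne', one_mul]
  -- pointwise min/max facts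
  have hmin1 : ∀ i j, min (B i j) (B j i) ≤ 1 := by
    intro i j
    have ha := min_le_left (B i j) (B j i)
    have hb := min_le_right (B i j) (B j i)
    have hp := hBpos i j
    have hq := hBpos j i
    have hm := hBmul i j
    nlinarith [lt_min hp hq]
  have hmax1 : ∀ i j, 1 ≤ max (B i j) (B j i) := by
    intro i j
    have ha := le_max_left (B i j) (B j i)
    have hb := le_max_right (B i j) (B j i)
    nlinarith [hBmul i j, hBpos i j, hBpos j i]
  -- sums
  set A := ∑ i, ∑ j, if i < j then min (B i j) (B j i) else 0 with hA
  set M := ∑ i, ∑ j, if i < j then max (B i j) (B j i) else 0 with hM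
  set T := ∑ i, ∑ j, if i < j then B i j + B j i else 0 with hT
  set N := ∑ i : Fin n, ∑ j : Fin n, if i < j then (1:ℝ) else 0 with hN
  have hsplit : ∑ i, ∑ j, B i j = T + (n:ℝ) := by
    rw [split_sum B]
    congr 1
    simp [hBdiag]
  have hcount : 2 * N = (n:ℝ)^2 - (n:ℝ) := by
    have := split_sum (fun _ _ : Fin n => (1:ℝ))
    simp only [Finset.sum_const, Finset.card_univ, Fintype.card_fin, nsmul_eq_mul,
      mul_one] at this
    have h2 : (∑ i : Fin n, ∑ j : Fin n, if i < j then (1:ℝ) + 1 else 0) = 2 * N := by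
      rw [hN, Finset.mul_sum]
      refine Finset.sum_congr rfl fun i _ => ?_
      rw [Finset.mul_sum]
      refine Finset.sum_congr rfl fun j _ => ?_
      split <;> norm_num
    rw [h2] at this
    nlinarith [this]
  -- sum comparisons
  have sum_le : ∀ (f g : Fin n → Fin n → ℝ), (∀ i j, i < j → f i j ≤ g i j) →
      (∑ i, ∑ j, if i < j then f i j else 0) ≤ ∑ i, ∑ j, if i < j then g i j else 0 := by
    intro f g hfg
    refine Finset.sum_le_sum fun i _ => Finset.sum_le_sum fun j _ => ?_
    split
    · exact hfg i j ‹_›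
    · exact le_rfl
  have hAN : A ≤ N := sum_le _ _ fun i j _ => hmin1 i j
  have hAT : 2 * A ≤ T := by
    have := sum_le (fun i j => min (B i j) (B j i) + min (B i j) (B j i))
      (fun i j => B i j + B j i) (fun i j _ => by
        have := min_le_left (B i j) (B j i)
        have := min_le_right (B i j) (B j i)
        linarith)
    calc 2 * A = ∑ i, ∑ j, if i < j then
          min (B i j) (B j i) + min (B i j) (B j i) else 0 := by
          rw [hA, Finset.mul_sum]
          refine Finset.sum_congr rfl fun i _ => ?_
          rw [Finset.mul_sum]
          refine Finset.sum_congr rfl fun j _ => ?_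
          split <;> ring
      _ ≤ T := this
  have hNM : N ≤ M := sum_le _ _ fun i j _ => hmax1 i j
  have hTM : T ≤ 2 * M := by
    have := sum_le (fun i j => B i j + B j i)
      (fun i j => max (B i j) (B j i) + max (B i j) (B j i)) (fun i j _ => by
        have := le_max_left (B i j) (B j i)
        have := le_max_right (B i j) (B j i)
        linarith)
    calc T ≤ ∑ i, ∑ j, if i < j then
          max (B i j) (B j i) + max (B i j) (B j i) else 0 := this
      _ = 2 * M := by
          rw [hM, Finset.mul_sum]
          refine Finset.sum_congr rfl fun i _ => ?_
          rw [Finset.mul_sum]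
          refine Finset.sum_congr rfl fun j _ => ?_
          split <;> ring
  -- vmax
  have hnn : Nonempty (Fin n) := ⟨⟨0, by omega⟩⟩
  have hBmax : ∀ i j, B i j ≤ vcompMax w1 w2 := by
    intro i j
    calc B i j ≤ ⨆ j, B i j := le_ciSup (Set.Finite.bddAbove (Set.finite_range _)) j
      _ ≤ vcompMax w1 w2 :=
        le_ciSup (f := fun i => ⨆ j, B i j) (Set.Finite.bddAbove (Set.finite_range _)) i
  have hvpos : 1 ≤ vcompMax w1 w2 := by
    have := hBmax ⟨0, by omega⟩ ⟨0, by omega⟩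
    rwa [hBdiag] at this
  have hMv : M ≤ N * vcompMax w1 w2 := by
    have := sum_le (fun i j => max (B i j) (B j i)) (fun _ _ => vcompMax w1 w2)
      (fun i j _ => max_le (hBmax i j) (hBmax j i))
    calc M ≤ ∑ i : Fin n, ∑ j : Fin n, if i < j then vcompMax w1 w2 else 0 := this
      _ = N * vcompMax w1 w2 := by
          rw [hN, Finset.sum_mul]
          refine Finset.sum_congr rfl fun i _ => ?_
          rw [Finset.sum_mul]
          refine Finset.sum_congr rfl fun j _ => ?_
          split <;> ring
  refine ⟨?_, ?_, ?_⟩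
  · show (2 / ((n:ℝ) * ((n:ℝ) - 1))) * A ≤ (1 / (n:ℝ)^2) * (∑ i, ∑ j, B i j)
    rw [hsplit, div_mul_eq_mul_div, div_mul_eq_mul_div, div_le_div_iff₀ hd he]
    nlinarith
  · show (1 / (n:ℝ)^2) * (∑ i, ∑ j, B i j) ≤ (2 / ((n:ℝ) * ((n:ℝ) - 1))) * M
    rw [hsplit, div_mul_eq_mul_div, div_mul_eq_mul_div, div_le_div_iff₀ he hd]
    nlinarith
  · show (2 / ((n:ℝ) * ((n:ℝ) - 1))) * M ≤ vcompMax w1 w2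
    rw [div_mul_eq_mul_div, div_le_iff₀ hd]
    nlinarith
end
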